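/- arXiv:2601.17169 — 9 statements merged into one kernel-verified Lean document; each statement's English description precedes it below -/
import Mathlib

section
/- Let G be a tournament with no induced subtournament isomorphic to C_4, where C_4 is the 4-vertex tournament with vertices a,b,c,d and arcs a→b, c→a, a→d, b→c, d→b, c→d. Let T = {a,b,c} be a cyclic triangle in G with a→b, b→c, c→a. Then every vertex v of G outside T is either a common out-neighbor of all of a,b,c, or a common in-neighbor of all of a,b,c. -/
/-- In a `C₄`-free tournament, every vertex outside a cyclic triangle {a,b,c}
is a common out-neighbour or a common in-neighbour of all of a,b,c.
`C₄` has arcs a→b, b→c, c→a, a→d, d→b, c→d. -/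
theorem C4_free_triangle_dominates
    {V : Type*} [Fintype V] (r : V → V → Prop)
    (hasym : ∀ u v : V, r u v → ¬ r v u)
    (htot : ∀ u v : V, u ≠ v → r u v ∨ r v u)
    (hC4free : ¬ ∃ a b c d : V,
      r a b ∧ r b c ∧ r c a ∧ r a d ∧ r d b ∧ r c d)
    (a b c : V) (hab : r a b) (hbc : r b c) (hca : r c a) :
    ∀ v : V, v ≠ a → v ≠ b → v ≠ c →
      (r a v ∧ r b v ∧ r c v) ∨ (r v a ∧ r v b ∧ r v c) := by
  intro v hva hvb hvc
  -- helper: if x→y→z→x is a cyclic triangle, x→v and v→y give a C₄.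
  have key : ∀ x y z : V, r x y → r y z → r z x → r x v → r v y → v ≠ z → False := by
    intro x y z hxy hyz hzx hxv hvy hvz
    rcases htot v z hvz with hvz' | hzv
    · exact hC4free ⟨v, z, x, y, hvz', hzx, hxv, hvy, hyz, hxy⟩
    · exact hC4free ⟨x, y, z, v, hxy, hyz, hzx, hxv, hvy, hzv⟩
  rcases htot a v (Ne.symm hva) with hav | hva'
  · rcases htot b v (Ne.symm hvb) with hbv | hvb'
    · rcases htot c v (Ne.symm hvc) with hcv | hvc'
      · exact Or.inl ⟨hav, hbv, hcv⟩
      · exact (key b c a hbc hca hab hbv hvc' hva).elim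
    · exact (key a b c hab hbc hca hav hvb' hvc).elim
  · rcases htot c v (Ne.symm hvc) with hcv | hvc'
    · exact (key c a b hca hab hbc hcv hva' hvb).elim
    · rcases htot b v (Ne.symm hvb) with hbv | hvb'
      · exact (key b c a hbc hca hab hbv hvc' hva).elim
      · exact Or.inr ⟨hva', hvb', hvc'⟩
end

section
/- Let G be a C_4-free tournament containing a cyclic triangle T = {a,b,c}. Let T^+ be the set of common out-neighbors of a,b,c and T^- the set of common in-neighbors of a,b,c. Then every vertex of T^- has an arc to every vertex of T^+ (i.e., T^- ⇒ T^+). -/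
/-- In a `C₄`-free tournament with a cyclic triangle {a,b,c}, the common
in-neighbours of the triangle all beat the common out-neighbours. -/
theorem C4_free_Tminus_beats_Tplus
    {V : Type*} [Fintype V] (r : V → V → Prop)
    (hasym : ∀ u v : V, r u v → ¬ r v u)
    (htot : ∀ u v : V, u ≠ v → r u v ∨ r v u)
    (hC4free : ¬ ∃ a b c d : V,
      r a b ∧ r b c ∧ r c a ∧ r a d ∧ r d b ∧ r c d)
    (a b c : V) (hab : r a b) (hbc : r b c) (hca : r c a) :
    ∀ u w : V, (r u a ∧ r u b ∧ r u c) → (r a w ∧ r b w ∧ r c w) → r u w := by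
  rintro u w ⟨hua, hub, huc⟩ ⟨haw, hbw, hcw⟩
  by_contra h
  have hwu : r w u := by
    rcases htot u w (fun e => hasym u a hua (e ▸ haw)) with h' | h'
    · exact absurd h' h
    · exact h'
  exact hC4free ⟨a, w, u, b, haw, hwu, hua, hab, hbw, hub⟩
end

section
/- Every strongly connected component of a C_4-free tournament has size 1 or 3. -/
section Aux

variable {V : Type*} {r : V → V → Prop}

/-- Any vertex is homogeneous towards any 3-cycle in a C4-free tournament. -/
lemma c4_dom (hasym : ∀ u v : V, r u v → ¬ r v u)
    (htot : ∀ u v : V, u ≠ v → r u v ∨ r v u)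
    (hC4free : ¬ ∃ a b c d : V, r a b ∧ r b c ∧ r c a ∧ r a d ∧ r d b ∧ r c d)
    {a b c d : V} (hab : r a b) (hbc : r b c) (hca : r c a)
    (hda : d ≠ a) (hdb : d ≠ b) (hdc : d ≠ c) :
    (r d a ∧ r d b ∧ r d c) ∨ (r a d ∧ r b d ∧ r c d) := by
  rcases htot d a hda with x1 | x1 <;> rcases htot d b hdb with x2 | x2 <;>
    rcases htot d c hdc with x3 | x3
  · exact Or.inl ⟨x1, x2, x3⟩
  · exact absurd ⟨d, b, c, a, x2, hbc, x3, x1, hab, hca⟩ hC4free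
  · exact absurd ⟨d, a, b, c, x1, hab, x2, x3, hca, hbc⟩ hC4free
  · exact absurd ⟨c, a, b, d, hca, hab, hbc, x3, x1, x2⟩ hC4free
  · exact absurd ⟨d, c, a, b, x3, hca, x1, x2, hbc, hab⟩ hC4free
  · exact absurd ⟨a, b, c, d, hab, hbc, hca, x1, x2, x3⟩ hC4free
  · exact absurd ⟨b, c, a, d, hbc, hca, hab, x2, x3, x1⟩ hC4free
  · exact Or.inr ⟨x1, x2, x3⟩

/-- In a C4-free tournament, reachability implies reachability in at most 2 steps. -/
lemma c4_short (hasym : ∀ u v : V, r u v → ¬ r v u)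
    (htot : ∀ u v : V, u ≠ v → r u v ∨ r v u)
    (hC4free : ¬ ∃ a b c d : V, r a b ∧ r b c ∧ r c a ∧ r a d ∧ r d b ∧ r c d)
    {x y : V} (h : Relation.ReflTransGen r x y) :
    x = y ∨ r x y ∨ ∃ w, r x w ∧ r w y := by
  induction h with
  | refl => exact Or.inl rfl
  | @tail b c h1 h2 ih =>
    rcases ih with rfl | hxb | ⟨w, hxw, hwb⟩
    · exact Or.inr (Or.inl h2)
    · exact Or.inr (Or.inr ⟨b, hxb, h2⟩)
    · rcases eq_or_ne x c with rfl | hxc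
      · exact Or.inl rfl
      rcases htot x c hxc with h' | h'
      · exact Or.inr (Or.inl h')
      rcases eq_or_ne x b with rfl | hxb
      · exact Or.inr (Or.inl h2)
      rcases htot x b hxb with h'' | h''
      · exact Or.inr (Or.inr ⟨b, h'', h2⟩)
      -- cycle x → w → b → x, and c with r b c, r c x : contradiction
      exfalso
      have hcx : c ≠ x := by rintro rfl; exact hasym _ _ h' h'
      have hcw : c ≠ w := by rintro rfl; exact hasym _ _ hxw h'
      have hcb : c ≠ b := by rintro rfl; exact hasym _ _ h2 h2
      rcases c4_dom hasym htot hC4free hxw hwb h'' hcx hcw hcb with ⟨q1, q2, q3⟩ | ⟨q1, q2, q3⟩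
      · exact hasym b c h2 q3
      · exact hasym c x h' q1

end Aux

/-- Every strongly connected component of a `C₄`-free tournament has size
1 or 3. -/
theorem C4_free_scc_size_one_or_three
    {V : Type*} [Fintype V] (r : V → V → Prop)
    (hasym : ∀ u v : V, r u v → ¬ r v u)
    (htot : ∀ u v : V, u ≠ v → r u v ∨ r v u)
    (hC4free : ¬ ∃ a b c d : V,
      r a b ∧ r b c ∧ r c a ∧ r a d ∧ r d b ∧ r c d) :
    ∀ v : V,
      ({u | Relation.ReflTransGen r v u ∧ Relation.ReflTransGen r u v} : Set V).ncard = 1 ∨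
      ({u | Relation.ReflTransGen r v u ∧ Relation.ReflTransGen r u v} : Set V).ncard = 3 := by
  intro v
  have hirr : ∀ x : V, ¬ r x x := fun x h => hasym x x h h
  by_cases hS : ∀ u, Relation.ReflTransGen r v u → Relation.ReflTransGen r u v → u = v
  · left
    have hset : ({u | Relation.ReflTransGen r v u ∧ Relation.ReflTransGen r u v} : Set V) = {v} :=
      Set.eq_singleton_iff_unique_mem.mpr
        ⟨⟨Relation.ReflTransGen.refl, Relation.ReflTransGen.refl⟩,
         fun u hu => hS u hu.1 hu.2⟩
    rw [hset]
    exact Set.ncard_singleton v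
  · right
    push_neg at hS
    obtain ⟨u, h1, h2, huv⟩ := hS
    -- find a 3-cycle v → a → b → v
    obtain ⟨a, b, hva, hab, hbv⟩ : ∃ a b, r v a ∧ r a b ∧ r b v := by
      rcases htot u v huv with h | h
      · rcases c4_short hasym htot hC4free h1 with e | h' | ⟨w, hw1, hw2⟩
        · exact absurd e.symm huv
        · exact absurd h (hasym v u h')
        · exact ⟨w, u, hw1, hw2, h⟩
      · rcases c4_short hasym htot hC4free h2 with e | h' | ⟨w, hw1, hw2⟩
        · exact absurd e huv
        · exact absurd h' (hasym v u h)
        · exact ⟨u, w, h, hw1, hw2⟩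
    have hvna : v ≠ a := by rintro rfl; exact hirr _ hva
    have hvnb : v ≠ b := by rintro rfl; exact hirr _ hbv
    have hanb : a ≠ b := by rintro rfl; exact hirr _ hab
    have haS : Relation.ReflTransGen r v a ∧ Relation.ReflTransGen r a v :=
      ⟨Relation.ReflTransGen.single hva,
       Relation.ReflTransGen.head hab (Relation.ReflTransGen.single hbv)⟩
    have hbS : Relation.ReflTransGen r v b ∧ Relation.ReflTransGen r b v :=
      ⟨Relation.ReflTransGen.head hva (Relation.ReflTransGen.single hab),
       Relation.ReflTransGen.single hbv⟩
    have hSeq : ({u | Relation.ReflTransGen r v u ∧ Relation.ReflTransGen r u v} : Set V)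
        = {v, a, b} := by
      apply Set.Subset.antisymm
      · rintro d ⟨hd1, hd2⟩
        by_contra hd
        simp only [Set.mem_insert_iff, Set.mem_singleton_iff, not_or] at hd
        obtain ⟨hdv, hda, hdb⟩ := hd
        rcases c4_dom hasym htot hC4free hva hab hbv hdv hda hdb with ⟨q1, q2, q3⟩ | ⟨q1, q2, q3⟩
        · -- d beats v, a, b; v reaches d in ≤ 2 steps
          rcases c4_short hasym htot hC4free hd1 with e | h' | ⟨x, hvx, hxd⟩
          · exact hdv e.symm
          · exact hasym d v q1 h'
          · have hxv : x ≠ v := by rintro rfl; exact hirr _ hvx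
            have hxa : x ≠ a := by rintro rfl; exact hasym _ _ q2 hxd
            have hxb : x ≠ b := by rintro rfl; exact hasym _ _ q3 hxd
            rcases c4_dom hasym htot hC4free hva hab hbv hxv hxa hxb
              with ⟨p1, p2, p3⟩ | ⟨p1, p2, p3⟩
            · exact hasym v x hvx p1
            · -- cycle v → x → d → v, external a with r a x
              have hav : a ≠ v := hvna.symm
              have hax : a ≠ x := by rintro rfl; exact hirr _ p2
              have had : a ≠ d := by rintro rfl; exact hirr _ q2
              rcases c4_dom hasym htot hC4free hvx hxd q1 hav hax had
                with ⟨s1, s2, s3⟩ | ⟨s1, s2, s3⟩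
              · exact hasym d a q2 s3
              · exact hasym a x p2 s2
        · -- v, a, b all beat d; d reaches v in ≤ 2 steps
          rcases c4_short hasym htot hC4free hd2 with e | h' | ⟨x, hdx, hxv'⟩
          · exact hdv e
          · exact hasym v d q1 h'
          · have hxv : x ≠ v := by rintro rfl; exact hirr _ hxv'
            have hxa : x ≠ a := by rintro rfl; exact hasym _ _ q2 hdx
            have hxb : x ≠ b := by rintro rfl; exact hasym _ _ q3 hdx
            rcases c4_dom hasym htot hC4free hva hab hbv hxv hxa hxb
              with ⟨p1, p2, p3⟩ | ⟨p1, p2, p3⟩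
            · -- cycle d → x → v → d, external a with r x a
              have had : a ≠ d := by rintro rfl; exact hirr _ q2
              have hax : a ≠ x := by rintro rfl; exact hirr _ p2
              have hav : a ≠ v := hvna.symm
              rcases c4_dom hasym htot hC4free hdx hxv' q1 had hax hav
                with ⟨s1, s2, s3⟩ | ⟨s1, s2, s3⟩
              · exact hasym x a p2 s2
              · exact hasym a d q2 s1
            · exact hasym x v hxv' p1
      · intro d hd
        simp only [Set.mem_insert_iff, Set.mem_singleton_iff] at hd
        rcases hd with rfl | rfl | rfl
        · exact ⟨Relation.ReflTransGen.refl, Relation.ReflTransGen.refl⟩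
        · exact haS
        · exact hbS
    rw [hSeq]
    exact Set.ncard_eq_three.mpr ⟨v, a, b, hvna, hvnb, hanb, rfl⟩
end

section
/- Let G be a graph on vertices v_1,...,v_n and let G' be the graph on vertices v_1,v_1',...,v_n,v_n' whose edge set equals E(G) (on the original vertices). Let T be the tournament on these 2n vertices whose backedge graph under the ordering (v_1,v_1',...,v_n,v_n') is G'. Then for every minimum vertex cover C of G, the complement of C in V(T) induces a transitive subtournament of T, and the minimum size of a feedback vertex set of T equals the size of a minimum vertex cover of G. -/
/-- The ordering `(v_1, v_1', ..., v_n, v_n')` on `Fin n × Fin 2`: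
`(i,a)` precedes `(j,b)` iff `i < j`, or `i = j` and `a < b`. -/
def dupOrd {n : ℕ} (x y : Fin n × Fin 2) : Prop :=
  x.1 < y.1 ∨ (x.1 = y.1 ∧ x.2 < y.2)

/-- The tournament whose backedge graph, under the ordering
`(v_1, v_1', ..., v_n, v_n')`, consists of the edges of `G` placed on the
original (unprimed, i.e. second coordinate `0`) vertices. -/
def dupTournament {n : ℕ} (G : SimpleGraph (Fin n)) (x y : Fin n × Fin 2) : Prop :=
  (dupOrd x y ∧ ¬ (x.2 = 0 ∧ y.2 = 0 ∧ G.Adj x.1 y.1)) ∨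
  (dupOrd y x ∧ (x.2 = 0 ∧ y.2 = 0 ∧ G.Adj x.1 y.1))

/-- `C` is a vertex cover of `G`. -/
def IsVC {n : ℕ} (G : SimpleGraph (Fin n)) (C : Finset (Fin n)) : Prop :=
  ∀ i j : Fin n, G.Adj i j → i ∈ C ∨ j ∈ C

/-- `S` is a feedback vertex set of the tournament `r`: deleting `S` leaves a
transitive tournament. -/
def IsFVS {V : Type*} (r : V → V → Prop) (S : Finset V) : Prop :=
  ∀ x y z : V, x ∉ S → y ∉ S → z ∉ S → r x y → r y z → r x z

lemma dupOrd_trans {n : ℕ} {x y z : Fin n × Fin 2} (h1 : dupOrd x y) (h2 : dupOrd y z) :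
    dupOrd x z := by
  rcases h1 with h | ⟨e, h⟩ <;> rcases h2 with h' | ⟨e', h'⟩
  · exact Or.inl (h.trans h')
  · exact Or.inl (e' ▸ h)
  · exact Or.inl (e ▸ h')
  · exact Or.inr ⟨e.trans e', h.trans h'⟩

lemma key_cycle {n : ℕ} {G : SimpleGraph (Fin n)} {S : Finset (Fin n × Fin 2)}
    (hS : IsFVS (dupTournament G) S) {i j : Fin n} (hij : i < j) (hadj : G.Adj i j)
    (hi : ∀ a, (i, a) ∉ S) (hj : ∀ a, (j, a) ∉ S) : False := by
  have h1 : dupTournament G (i, 0) (i, 1) :=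
    Or.inl ⟨Or.inr ⟨rfl, by norm_num⟩, fun h => by simp at h⟩
  have h2 : dupTournament G (i, 1) (j, 0) :=
    Or.inl ⟨Or.inl hij, fun h => by simp at h⟩
  have h3 : dupTournament G (j, 0) (i, 0) :=
    Or.inr ⟨Or.inl hij, rfl, rfl, hadj.symm⟩
  have htr := hS (i, 0) (i, 1) (j, 0) (hi 0) (hi 1) (hj 0) h1 h2
  rcases htr with ⟨_, hn⟩ | ⟨ho, _⟩
  · exact hn ⟨rfl, rfl, hadj⟩
  · rcases ho with h | ⟨e, h⟩
    · exact absurd (hij.trans h) (lt_irrefl _)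
    · simp at h

lemma vc_of_fvs {n : ℕ} {G : SimpleGraph (Fin n)} {S : Finset (Fin n × Fin 2)}
    (hS : IsFVS (dupTournament G) S) : IsVC G (S.image Prod.fst) := by
  intro i j hadj
  by_contra hcon
  push_neg at hcon
  obtain ⟨hi, hj⟩ := hcon
  have hi' : ∀ a, (i, a) ∉ S := fun a hmem =>
    hi (Finset.mem_image.mpr ⟨(i, a), hmem, rfl⟩)
  have hj' : ∀ a, (j, a) ∉ S := fun a hmem =>
    hj (Finset.mem_image.mpr ⟨(j, a), hmem, rfl⟩)
  rcases lt_or_gt_of_ne hadj.ne with h | h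
  · exact key_cycle hS h hadj hi' hj'
  · exact key_cycle hS h hadj.symm hj' hi'

/-- For any minimum vertex cover `C` of `G`: the complement of (the vertices
over) `C` induces a transitive subtournament of `T`, and the minimum size of a
feedback vertex set of `T` equals `|C|`. -/
theorem reduction_vertex_cover_to_fvs
    (n : ℕ) (G : SimpleGraph (Fin n)) (C : Finset (Fin n))
    (hC : IsVC G C) (hCmin : ∀ C' : Finset (Fin n), IsVC G C' → C.card ≤ C'.card) :
    (∀ x y z : Fin n × Fin 2, x.1 ∉ C → y.1 ∉ C → z.1 ∉ C →
        dupTournament G x y → dupTournament G y z → dupTournament G x z) ∧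
    sInf {k : ℕ | ∃ S : Finset (Fin n × Fin 2), IsFVS (dupTournament G) S ∧ S.card = k}
      = C.card := by
  have nob : ∀ x y : Fin n × Fin 2, x.1 ∉ C → y.1 ∉ C →
      ¬ (x.2 = 0 ∧ y.2 = 0 ∧ G.Adj x.1 y.1) := by
    rintro x y hx hy ⟨_, _, hadj⟩
    rcases hC _ _ hadj with h | h
    · exact hx h
    · exact hy h
  constructor
  · intro x y z hx hy hz hxy hyz
    have oxy : dupOrd x y := by
      rcases hxy with ⟨h, _⟩ | ⟨_, hc⟩
      · exact h
      · exact absurd hc (nob x y hx hy)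
    have oyz : dupOrd y z := by
      rcases hyz with ⟨h, _⟩ | ⟨_, hc⟩
      · exact h
      · exact absurd hc (nob y z hy hz)
    exact Or.inl ⟨dupOrd_trans oxy oyz, nob x z hx hz⟩
  · -- the set image of C is an FVS
    have hinj : Function.Injective (fun i : Fin n => ((i, 0) : Fin n × Fin 2)) :=
      fun a b h => (Prod.ext_iff.mp h).1
    have hFVS : IsFVS (dupTournament G) (C.image fun i => (i, 0)) := by
      intro x y z hx hy hz hxy hyz
      have hmem : ∀ w : Fin n × Fin 2, w ∉ C.image (fun i => ((i, 0) : Fin n × Fin 2)) →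
          ¬ (w.2 = 0 ∧ w.1 ∈ C) := by
        rintro w hw ⟨h0, hwC⟩
        exact hw (Finset.mem_image.mpr ⟨w.1, hwC, by rw [← h0]⟩)
      have nob' : ∀ a b : Fin n × Fin 2,
          a ∉ C.image (fun i => ((i, 0) : Fin n × Fin 2)) →
          b ∉ C.image (fun i => ((i, 0) : Fin n × Fin 2)) →
          ¬ (a.2 = 0 ∧ b.2 = 0 ∧ G.Adj a.1 b.1) := by
        rintro a b ha hb ⟨h0, h1, hadj⟩
        rcases hC _ _ hadj with h | h
        · exact hmem a ha ⟨h0, h⟩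
        · exact hmem b hb ⟨h1, h⟩
      have oxy : dupOrd x y := by
        rcases hxy with ⟨h, _⟩ | ⟨_, hc⟩
        · exact h
        · exact absurd hc (nob' x y hx hy)
      have oyz : dupOrd y z := by
        rcases hyz with ⟨h, _⟩ | ⟨_, hc⟩
        · exact h
        · exact absurd hc (nob' y z hy hz)
      exact Or.inl ⟨dupOrd_trans oxy oyz, nob' x z hx hz⟩
    have hmemS : C.card ∈ {k : ℕ | ∃ S : Finset (Fin n × Fin 2),
        IsFVS (dupTournament G) S ∧ S.card = k} :=
      ⟨C.image fun i => (i, 0), hFVS, Finset.card_image_of_injective _ hinj⟩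
    apply le_antisymm
    · exact Nat.sInf_le hmemS
    · apply le_csInf ⟨_, hmemS⟩
      rintro k ⟨S, hS, rfl⟩
      calc C.card ≤ (S.image Prod.fst).card := hCmin _ (vc_of_fvs hS)
        _ ≤ S.card := Finset.card_image_le
end

section
/- Let G be a graph, let G' be the graph obtained by duplicating each vertex v_i of G as a pair v_i, v_i' where all edges of G are kept on the original vertices and each v_i' is isolated, and let T be the tournament whose backedge graph under the ordering (v_1,v_1',...,v_n,v_n') is G'. If S is a set of vertices of T such that T \ S is transitive, and there is an edge {v_i, v_j} of G (i < j) with v_i, v_i', v_j all outside S, then T \ S contains a cyclic triangle, a contradiction; hence the set {v_i : {v_i,v_i'} ∩ S ≠ ∅} is a vertex cover of G. -/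
lemma dup_key {n : ℕ} (G : SimpleGraph (Fin n)) (S : Set (Fin n × Fin 2))
    (hS : ∀ x y z : Fin n × Fin 2, x ∉ S → y ∉ S → z ∉ S →
        dupTournament G x y → dupTournament G y z → dupTournament G x z)
    (a b : Fin n) (hab : a < b) (hadj : G.Adj a b)
    (h0 : (a, (0 : Fin 2)) ∉ S) (h1 : (a, (1 : Fin 2)) ∉ S)
    (h2 : (b, (0 : Fin 2)) ∉ S) : False := by
  have t1 : dupTournament G (a, 0) (a, 1) := by
    unfold dupTournament dupOrd; simp
  have t2 : dupTournament G (a, 1) (b, 0) := by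
    unfold dupTournament dupOrd; simp [hab]
  have t3 := hS _ _ _ h0 h1 h2 t1 t2
  rcases t3 with ⟨_, hna⟩ | ⟨ho, _⟩
  · exact hna ⟨rfl, rfl, hadj⟩
  · rcases ho with h | ⟨h, h'⟩
    · exact absurd h (not_lt.2 hab.le)
    · exact absurd h' (lt_irrefl _)

/-- If `S` hits every cyclic triangle of `T` (i.e. `T \ S` is transitive), then
the set of `v_i` with `{v_i, v_i'} ∩ S ≠ ∅` is a vertex cover of `G`. -/
theorem fvs_gives_vertex_cover
    (n : ℕ) (G : SimpleGraph (Fin n)) (S : Set (Fin n × Fin 2))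
    (hS : ∀ x y z : Fin n × Fin 2, x ∉ S → y ∉ S → z ∉ S →
        dupTournament G x y → dupTournament G y z → dupTournament G x z) :
    ∀ i j : Fin n, G.Adj i j →
      ((i, (0 : Fin 2)) ∈ S ∨ (i, (1 : Fin 2)) ∈ S) ∨
      ((j, (0 : Fin 2)) ∈ S ∨ (j, (1 : Fin 2)) ∈ S) := by
  intro i j hadj
  by_contra h
  push_neg at h
  obtain ⟨⟨hi0, hi1⟩, hj0, hj1⟩ := h
  rcases lt_trichotomy i j with hij | hij | hij
  · exact dup_key G S hS i j hij hadj hi0 hi1 hj0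
  · exact absurd hadj (by simp [hij])
  · exact dup_key G S hS j i hij hadj.symm hj0 hj1 hi0
end

section
/- For every odd n ≥ 5, deleting the vertices v_{(n-1)/2} and v_n from U_n yields a tournament isomorphic to U_{n-2}. -/
/-- The tournament `T_n` on vertices `v_1, ..., v_n` (vertex `v_{i+1}` is the
index `i : Fin n`): `v_i → v_j` iff `j - i ≡ 1, ..., (n-1)/2 (mod n)`. -/
def tnRel (n : ℕ) (i j : Fin n) : Prop :=
  1 ≤ (j.val + n - i.val) % n ∧ (j.val + n - i.val) % n ≤ (n - 1) / 2

/-- `U_n` is obtained from `T_n` by reversing all arcs with both ends in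
`{v_1, ..., v_{(n-1)/2}}` (i.e. indices `< (n-1)/2`). -/
def unRel (n : ℕ) (i j : Fin n) : Prop :=
  if i.val < (n - 1) / 2 ∧ j.val < (n - 1) / 2 then tnRel n j i else tnRel n i j

lemma tn_iff (n : ℕ) (i j : Fin n) :
    tnRel n i j ↔ (i.val < j.val ∧ j.val - i.val ≤ (n - 1) / 2) ∨
      (j.val < i.val ∧ j.val + n - i.val ≤ (n - 1) / 2) := by
  have hi := i.isLt
  have hj := j.isLt
  unfold tnRel
  rcases le_or_gt i.val j.val with h | h
  · have : (j.val + n - i.val) % n = j.val - i.val := by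
      have : j.val + n - i.val = (j.val - i.val) + n := by omega
      rw [this, Nat.add_mod_right, Nat.mod_eq_of_lt (by omega)]
    rw [this]; omega
  · have : (j.val + n - i.val) % n = j.val + n - i.val := by
      rw [Nat.mod_eq_of_lt (by omega)]
    rw [this]; omega

lemma un_iff (n : ℕ) (i j : Fin n) :
    unRel n i j ↔ if i.val < (n - 1) / 2 ∧ j.val < (n - 1) / 2 then
        ((j.val < i.val ∧ i.val - j.val ≤ (n - 1) / 2) ∨
          (i.val < j.val ∧ i.val + n - j.val ≤ (n - 1) / 2))
      else
        ((i.val < j.val ∧ j.val - i.val ≤ (n - 1) / 2) ∨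
          (j.val < i.val ∧ j.val + n - i.val ≤ (n - 1) / 2)) := by
  unfold unRel
  split_ifs with h
  · exact tn_iff n j i
  · exact tn_iff n i j

set_option maxHeartbeats 1000000 in
/-- For odd `n ≥ 5`, deleting `v_{(n-1)/2}` and `v_n` from `U_n` gives a
tournament isomorphic to `U_{n-2}`. -/
theorem un_delete_two_iso (n : ℕ) (hn : Odd n) (h5 : 5 ≤ n) :
    ∃ e : {x : Fin n // x.val ≠ (n - 1) / 2 - 1 ∧ x.val ≠ n - 1} ≃ Fin (n - 2),
      ∀ x y : {x : Fin n // x.val ≠ (n - 1) / 2 - 1 ∧ x.val ≠ n - 1},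
        unRel n x.1 y.1 ↔ unRel (n - 2) (e x) (e y) := by
  obtain ⟨m, hm⟩ := hn
  refine ⟨⟨fun x => ⟨if x.1.val < (n - 1) / 2 - 1 then x.1.val else x.1.val - 1, ?_⟩,
    fun y => ⟨⟨if y.val < (n - 1) / 2 - 1 then y.val else y.val + 1, ?_⟩, ?_, ?_⟩, ?_, ?_⟩, ?_⟩
  · have h1 := x.1.isLt; have h2 := x.2.1; have h3 := x.2.2
    split_ifs with h <;> omega
  · have := y.isLt; split_ifs with h <;> omega
  · have := y.isLt
    show (if (y:ℕ) < (n - 1) / 2 - 1 then (y:ℕ) else (y:ℕ) + 1) ≠ (n - 1) / 2 - 1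
    split_ifs with h <;> omega
  · have := y.isLt
    show (if (y:ℕ) < (n - 1) / 2 - 1 then (y:ℕ) else (y:ℕ) + 1) ≠ n - 1
    split_ifs with h <;> omega
  · intro x
    have h1 := x.1.isLt; have h2 := x.2.1; have h3 := x.2.2
    apply Subtype.ext; apply Fin.ext
    show (if (if (x.1:ℕ) < (n - 1) / 2 - 1 then (x.1:ℕ) else (x.1:ℕ) - 1) < (n - 1) / 2 - 1
        then (if (x.1:ℕ) < (n - 1) / 2 - 1 then (x.1:ℕ) else (x.1:ℕ) - 1)
        else (if (x.1:ℕ) < (n - 1) / 2 - 1 then (x.1:ℕ) else (x.1:ℕ) - 1) + 1) = (x.1:ℕ)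
    split_ifs <;> omega
  · intro y
    have h1 := y.isLt
    apply Fin.ext
    show (if (if (y:ℕ) < (n - 1) / 2 - 1 then (y:ℕ) else (y:ℕ) + 1) < (n - 1) / 2 - 1
        then (if (y:ℕ) < (n - 1) / 2 - 1 then (y:ℕ) else (y:ℕ) + 1)
        else (if (y:ℕ) < (n - 1) / 2 - 1 then (y:ℕ) else (y:ℕ) + 1) - 1) = (y:ℕ)
    split_ifs <;> omega
  · intro x y
    have hx1 := x.1.isLt; have hx2 := x.2.1; have hx3 := x.2.2
    have hy1 := y.1.isLt; have hy2 := y.2.1; have hy3 := y.2.2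
    rw [un_iff, un_iff]
    simp only [Equiv.coe_fn_mk]
    split_ifs <;> omega
end

section
/- For every odd n ≥ 5, in the tournament U_n with B = {v_1,...,v_{(n−1)/2}} and A = {v_{(n+1)/2},...,v_n}, there is no cyclic triangle with exactly two vertices in B. -/
lemma mod_helper (x n : ℕ) (h1 : x < 2*n) : x % n = if x < n then x else x - n := by
  split
  · exact Nat.mod_eq_of_lt ‹_›
  · rw [Nat.mod_eq_sub_mod (by omega)]; exact Nat.mod_eq_of_lt (by omega)

lemma key (n m : ℕ) (hnm : n = 2*m+1) (a b c : Fin n)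
    (ha : a.val < m) (hb : b.val < m) (hc : ¬ c.val < m)
    (h1 : unRel n a b) (h2 : unRel n b c) (h3 : unRel n c a) : False := by
  have hm : (n-1)/2 = m := by omega
  unfold unRel tnRel at h1 h2 h3
  rw [hm] at h1 h2 h3
  rw [if_pos ⟨ha, hb⟩] at h1
  rw [if_neg (by tauto)] at h2
  rw [if_neg (by tauto)] at h3
  have hA := a.isLt; have hB := b.isLt; have hC := c.isLt
  rw [mod_helper _ n (by omega)] at h1 h2 h3
  split_ifs at h1 h2 h3 <;> omega

lemma unRel_irrefl (n : ℕ) (a : Fin n) : ¬ unRel n a a := by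
  have : (a.val + n - a.val) % n = 0 := by
    have : a.val + n - a.val = n := by omega
    simp [this]
  unfold unRel tnRel
  split <;> simp [this]

/-- For odd `n ≥ 5`, `U_n` has no cyclic triangle with exactly two vertices in
`B = {v_1, ..., v_{(n-1)/2}}`. -/
theorem un_no_triangle_two_in_B (n : ℕ) (hn : Odd n) (h5 : 5 ≤ n) :
    ∀ a b c : Fin n, unRel n a b → unRel n b c → unRel n c a →
      (({a, b, c} : Finset (Fin n)).filter (fun x => x.val < (n - 1) / 2)).card ≠ 2 := by
  intro a b c hab hbc hca hcard
  obtain ⟨m, hm⟩ : ∃ m, n = 2*m+1 := by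
    obtain ⟨k, hk⟩ := hn; exact ⟨k, by omega⟩
  have hmeq : (n-1)/2 = m := by omega
  have hne_ab : a ≠ b := by rintro rfl; exact unRel_irrefl n a hab
  have hne_bc : b ≠ c := by rintro rfl; exact unRel_irrefl n b hbc
  have hne_ca : c ≠ a := by rintro rfl; exact unRel_irrefl n c hca
  rw [hmeq] at hcard
  by_cases pa : a.val < m <;> by_cases pb : b.val < m <;> by_cases pc : c.val < m
  · -- all in B: filter card 3
    rw [Finset.filter_insert, Finset.filter_insert, Finset.filter_singleton,
      if_pos pa, if_pos pb, if_pos pc] at hcard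
    rw [Finset.card_insert_of_notMem (by simp [hne_ab, hne_ca.symm]),
      Finset.card_insert_of_notMem (by simp [hne_bc])] at hcard
    simp at hcard
  · exact key n m hm a b c pa pb pc hab hbc hca
  · exact key n m hm c a b pc pa pb hca hab hbc
  · rw [Finset.filter_insert, Finset.filter_insert, Finset.filter_singleton,
      if_pos pa, if_neg pb, if_neg pc] at hcard
    simp at hcard
  · exact key n m hm b c a pb pc pa hbc hca hab
  · rw [Finset.filter_insert, Finset.filter_insert, Finset.filter_singleton,
      if_neg pa, if_pos pb, if_neg pc] at hcard
    simp at hcard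
  · rw [Finset.filter_insert, Finset.filter_insert, Finset.filter_singleton,
      if_neg pa, if_neg pb, if_pos pc] at hcard
    simp at hcard
  · rw [Finset.filter_insert, Finset.filter_insert, Finset.filter_singleton,
      if_neg pa, if_neg pb, if_neg pc] at hcard
    simp at hcard
end

section
/- Let G be a tournament, X a nontrivial homogeneous set of G, and let S be a transitive-inducing subset of V(G) of maximum weight with respect to a weight function w: V(G) → ℚ₊. If S ∩ X ≠ ∅, then S ∩ X is a subset of X inducing a transitive tournament of maximum weight among all such subsets of X. -/
/-- `X` is a homogeneous set of the tournament `r`. -/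
def IsHomog {V : Type*} (r : V → V → Prop) (X : Finset V) : Prop :=
  ∀ v : V, v ∉ X → (∀ x ∈ X, r v x) ∨ (∀ x ∈ X, r x v)

/-- `S` is an independent set: it induces a transitive subtournament. -/
def IsIndep {V : Type*} (r : V → V → Prop) (S : Finset V) : Prop :=
  ∀ a ∈ S, ∀ b ∈ S, ∀ c ∈ S, r a b → r b c → r a c

/-- If `X` is a nontrivial homogeneous set and `S` is a maximum-weight
independent set with `S ∩ X ≠ ∅`, then `S ∩ X` is a maximum-weight
independent subset of `X`. -/
theorem max_indep_meets_homogeneous_set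
    {V : Type*} [Fintype V] [DecidableEq V] (r : V → V → Prop)
    (hasym : ∀ u v : V, r u v → ¬ r v u)
    (htot : ∀ u v : V, u ≠ v → r u v ∨ r v u)
    (w : V → ℚ) (hw : ∀ v, 0 ≤ w v)
    (X : Finset V) (hX : IsHomog r X)
    (hX1 : 1 < X.card) (hX2 : X.card < Fintype.card V)
    (S : Finset V) (hS : IsIndep r S)
    (hSmax : ∀ S' : Finset V, IsIndep r S' → ∑ v ∈ S', w v ≤ ∑ v ∈ S, w v)
    (hSX : (S ∩ X).Nonempty) :
    ∀ U : Finset V, U ⊆ X → IsIndep r U → ∑ v ∈ U, w v ≤ ∑ v ∈ S ∩ X, w v := by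

  intro U hUX hU
  obtain ⟨x0, hx0⟩ := hSX
  have hx0S : x0 ∈ S := (Finset.mem_inter.mp hx0).1
  have hx0X : x0 ∈ X := (Finset.mem_inter.mp hx0).2
  have key1 : ∀ a, a ∉ X → ∀ x ∈ X, ∀ y ∈ X, r a x → r a y := by
    intro a ha x hx y hy h
    rcases hX a ha with h' | h'
    · exact h' y hy
    · exact absurd h (hasym _ _ (h' x hx))
  have key2 : ∀ a, a ∉ X → ∀ x ∈ X, ∀ y ∈ X, r x a → r y a := by
    intro a ha x hx y hy h
    rcases hX a ha with h' | h'
    · exact absurd h (hasym _ _ (h' x hx))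
    · exact h' y hy
  have hT : IsIndep r ((S \ X) ∪ U) := by
    intro a ha b hb c hc hab hbc
    rcases Finset.mem_union.mp ha with ha | ha <;>
      rcases Finset.mem_union.mp hb with hb | hb <;>
        rcases Finset.mem_union.mp hc with hc | hc
    · exact hS a (Finset.mem_sdiff.mp ha).1 b (Finset.mem_sdiff.mp hb).1
        c (Finset.mem_sdiff.mp hc).1 hab hbc
    · -- a,b ∈ S\X, c ∈ U
      have hcX := hUX hc
      have h1 : r b x0 := key1 b (Finset.mem_sdiff.mp hb).2 c hcX x0 hx0X hbc
      have h2 : r a x0 := hS a (Finset.mem_sdiff.mp ha).1 b (Finset.mem_sdiff.mp hb).1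
        x0 hx0S hab h1
      exact key1 a (Finset.mem_sdiff.mp ha).2 x0 hx0X c hcX h2
    · -- a ∈ S\X, b ∈ U, c ∈ S\X
      have hbX := hUX hb
      have h1 : r a x0 := key1 a (Finset.mem_sdiff.mp ha).2 b hbX x0 hx0X hab
      have h2 : r x0 c := key2 c (Finset.mem_sdiff.mp hc).2 b hbX x0 hx0X hbc
      exact hS a (Finset.mem_sdiff.mp ha).1 x0 hx0S c (Finset.mem_sdiff.mp hc).1 h1 h2
    · -- a ∈ S\X, b,c ∈ U
      exact key1 a (Finset.mem_sdiff.mp ha).2 b (hUX hb) c (hUX hc) hab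
    · -- a ∈ U, b,c ∈ S\X
      have haX := hUX ha
      have h1 : r x0 b := key2 b (Finset.mem_sdiff.mp hb).2 a haX x0 hx0X hab
      have h2 : r x0 c := hS x0 hx0S b (Finset.mem_sdiff.mp hb).1
        c (Finset.mem_sdiff.mp hc).1 h1 hbc
      exact key2 c (Finset.mem_sdiff.mp hc).2 x0 hx0X a haX h2
    · -- a ∈ U, b ∈ S\X, c ∈ U : contradiction
      have h1 : r x0 b := key2 b (Finset.mem_sdiff.mp hb).2 a (hUX ha) x0 hx0X hab
      have h2 : r b x0 := key1 b (Finset.mem_sdiff.mp hb).2 c (hUX hc) x0 hx0X hbc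
      exact absurd h1 (hasym _ _ h2)
    · -- a,b ∈ U, c ∈ S\X
      exact key2 c (Finset.mem_sdiff.mp hc).2 b (hUX hb) a (hUX ha) hbc
    · exact hU a ha b hb c hc hab hbc
  have hdisj : Disjoint (S \ X) U := by
    rw [Finset.disjoint_left]
    intro v hv hvU
    exact (Finset.mem_sdiff.mp hv).2 (hUX hvU)
  have h := hSmax _ hT
  rw [Finset.sum_union hdisj] at h
  have hsplit : ∑ v ∈ S ∩ X, w v + ∑ v ∈ S \ X, w v = ∑ v ∈ S, w v :=
    Finset.sum_inter_add_sum_sdiff S X w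
  linarith
end

section
/- Let G be a tournament with vertex partition (X, Y, Z) such that X ∪ Y, Y ∪ Z, and Z ∪ X each induce transitive subtournaments. Call a cyclic triangle {x,y,z} with x∈X, y∈Y, z∈Z an XYZ triangle if x→y, y→z, z→x, and an XZY triangle if x→z, z→y, y→x. Then for every vertex v, either every cyclic triangle containing v is an XYZ triangle, or every cyclic triangle containing v is an XZY triangle. -/
/-- In a tournament partitioned into `X, Y, Z` with `X ∪ Y`, `Y ∪ Z`, `Z ∪ X`
all transitive, every vertex `v` lies only in XYZ triangles, or only in XZY
triangles. -/
theorem single_triangle_type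
    {V : Type*} [Fintype V] (r : V → V → Prop)
    (hasym : ∀ u v : V, r u v → ¬ r v u)
    (htot : ∀ u v : V, u ≠ v → r u v ∨ r v u)
    (X Y Z : Set V)
    (hcover : X ∪ Y ∪ Z = Set.univ)
    (hXY : Disjoint X Y) (hYZ : Disjoint Y Z) (hZX : Disjoint Z X)
    (htXY : ∀ a ∈ X ∪ Y, ∀ b ∈ X ∪ Y, ∀ c ∈ X ∪ Y, r a b → r b c → r a c)
    (htYZ : ∀ a ∈ Y ∪ Z, ∀ b ∈ Y ∪ Z, ∀ c ∈ Y ∪ Z, r a b → r b c → r a c)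
    (htZX : ∀ a ∈ Z ∪ X, ∀ b ∈ Z ∪ X, ∀ c ∈ Z ∪ X, r a b → r b c → r a c) :
    ∀ v : V,
      (∀ x y z : V, x ∈ X → y ∈ Y → z ∈ Z → (v = x ∨ v = y ∨ v = z) →
        ((r x y ∧ r y z ∧ r z x) ∨ (r x z ∧ r z y ∧ r y x)) →
        (r x y ∧ r y z ∧ r z x)) ∨
      (∀ x y z : V, x ∈ X → y ∈ Y → z ∈ Z → (v = x ∨ v = y ∨ v = z) →
        ((r x y ∧ r y z ∧ r z x) ∨ (r x z ∧ r z y ∧ r y x)) →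
        (r x z ∧ r z y ∧ r y x)) := by
  intro v
  -- Key fact: two triangles of opposite orientation cannot share position
  have key : ∀ x y z x' y' z' : V, x ∈ X → y ∈ Y → z ∈ Z →
      x' ∈ X → y' ∈ Y → z' ∈ Z →
      (x = x' ∨ y = y' ∨ z = z') →
      r x y → r y z → r z x → r x' z' → r z' y' → r y' x' → False := by
    intro x y z x' y' z' hx hy hz hx' hy' hz' hpos hxy hyz hzx hxz' hzy' hyx'
    rcases hpos with rfl | rfl | rfl
    · -- shared X vertex: x = x'
      have hzz : r z z' := htZX z (Or.inl hz) x (Or.inr hx) z' (Or.inl hz') hzx hxz'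
      have hy'y : r y' y := htXY y' (Or.inr hy') x (Or.inl hx) y (Or.inr hy) hyx' hxy
      have hzy' : r z y' := htYZ z (Or.inr hz) z' (Or.inr hz') y' (Or.inl hy') hzz hzy'
      have hzy : r z y := htYZ z (Or.inr hz) y' (Or.inl hy') y (Or.inl hy) hzy' hy'y
      exact hasym y z hyz hzy
    · -- shared Y vertex: y = y'
      have hxx' : r x x' := htXY x (Or.inl hx) y (Or.inr hy) x' (Or.inl hx') hxy hyx'
      have hz'z : r z' z := htYZ z' (Or.inr hz') y (Or.inl hy) z (Or.inr hz) hzy' hyz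
      have hxz2 : r x z' := htZX x (Or.inr hx) x' (Or.inr hx') z' (Or.inl hz') hxx' hxz'
      have hxz : r x z := htZX x (Or.inr hx) z' (Or.inl hz') z (Or.inl hz) hxz2 hz'z
      exact hasym z x hzx hxz
    · -- shared Z vertex: z = z'
      have hx'x : r x' x := htZX x' (Or.inr hx') z (Or.inl hz) x (Or.inr hx) hxz' hzx
      have hy'x : r y' x := htXY y' (Or.inr hy') x' (Or.inl hx') x (Or.inl hx) hyx' hx'x
      have hy'y : r y' y := htXY y' (Or.inr hy') x (Or.inl hx) y (Or.inr hy) hy'x hxy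
      have hzy : r z y := htYZ z (Or.inr hz) y' (Or.inl hy') y (Or.inl hy) hzy' hy'y
      exact hasym y z hyz hzy
  -- Position matching via disjointness
  have pos : ∀ x y z x' y' z' : V, x ∈ X → y ∈ Y → z ∈ Z →
      x' ∈ X → y' ∈ Y → z' ∈ Z →
      (v = x ∨ v = y ∨ v = z) → (v = x' ∨ v = y' ∨ v = z') →
      (x = x' ∨ y = y' ∨ z = z') := by
    intro x y z x' y' z' hx hy hz hx' hy' hz' hv hv'
    rcases hv with rfl | rfl | rfl <;> rcases hv' with h | h | h
    · exact Or.inl h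
    · exact absurd hx (by rw [h]; exact Set.disjoint_right.mp hXY hy')
    · exact absurd hx (by rw [h]; exact Set.disjoint_left.mp hZX hz')
    · exact absurd hy (by rw [h]; exact Set.disjoint_left.mp hXY hx')
    · exact Or.inr (Or.inl h)
    · exact absurd hy (by rw [h]; exact Set.disjoint_right.mp hYZ hz')
    · exact absurd hz (by rw [h]; exact Set.disjoint_right.mp hZX hx')
    · exact absurd hz (by rw [h]; exact Set.disjoint_left.mp hYZ hy')
    · exact Or.inr (Or.inr h)
  by_cases h : ∃ x y z : V, x ∈ X ∧ y ∈ Y ∧ z ∈ Z ∧ (v = x ∨ v = y ∨ v = z) ∧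
      r x z ∧ r z y ∧ r y x
  · right
    obtain ⟨x', y', z', hx', hy', hz', hv', hxz', hzy', hyx'⟩ := h
    intro x y z hx hy hz hv ht
    rcases ht with ⟨hxy, hyz, hzx⟩ | ht
    · exact absurd (key x y z x' y' z' hx hy hz hx' hy' hz'
        (pos x y z x' y' z' hx hy hz hx' hy' hz' hv hv') hxy hyz hzx hxz' hzy' hyx') id
    · exact ht
  · left
    intro x y z hx hy hz hv ht
    rcases ht with ht | ⟨h1, h2, h3⟩
    · exact ht
    · exact absurd ⟨x, y, z, hx, hy, hz, hv, h1, h2, h3⟩ h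
end
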